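/- Let C = IC(X), x ∈ X, S_x = span{e_{x,y} : y ~ x}, and E_x = span{e_{x,y} : x ≤ y}. Then S_x is an essential C*-submodule of E_x: every nonzero C*-submodule of E_x intersects S_x nontrivially. In particular, for every nonzero z ∈ E_x there is c* ∈ C* with 0 ≠ c* → z ∈ S_x. -/
import Mathlib


open TensorProduct

/-- The underlying vector space of the incidence coalgebra `IC(X)`:
functions with finite support on the set of pairs `(x, y)` with `x ≤ y`. -/
abbrev IC (k X : Type*) [Field k] [Preorder X] : Type _ :=
  {p : X × X // p.1 ≤ p.2} →₀ k

/-- The basis element `e_{x,y}` of the incidence coalgebra. -/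
noncomputable def e (k : Type*) {X : Type*} [Field k] [Preorder X] (x y : X) (h : x ≤ y) :
    IC k X :=
  Finsupp.single ⟨(x, y), h⟩ 1

/-- The comultiplication `Δ(e_{x,y}) = Σ_{x ≤ z ≤ y} e_{x,z} ⊗ e_{z,y}`. -/
noncomputable def Δ (k : Type*) {X : Type*} [Field k] [Preorder X] [LocallyFiniteOrder X] :
    IC k X →ₗ[k] IC k X ⊗[k] IC k X :=
  Finsupp.lsum k fun p => LinearMap.toSpanSingleton k _
    (∑ z ∈ (Finset.Icc p.1.1 p.1.2).attach,
      e k p.1.1 z.1 (Finset.mem_Icc.mp z.2).1 ⊗ₜ[k] e k z.1 p.1.2 (Finset.mem_Icc.mp z.2).2)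

open Classical in
/-- The counit `ε(e_{x,y}) = δ_{x,y}`. -/
noncomputable def ε (k : Type*) {X : Type*} [Field k] [Preorder X] : IC k X →ₗ[k] k :=
  Finsupp.lsum k fun p => LinearMap.toSpanSingleton k k (if p.1.1 = p.1.2 then 1 else 0)

/-- The left action of `C* = Module.Dual k (IC k X)` on `C = IC k X` induced by the right
comodule structure: `c* → c = Σ c*(c₂) c₁`. -/
noncomputable def act (k : Type*) {X : Type*} [Field k] [Preorder X] [LocallyFiniteOrder X]
    (f : Module.Dual k (IC k X)) : IC k X →ₗ[k] IC k X :=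
  (TensorProduct.rid k (IC k X)).toLinearMap ∘ₗ TensorProduct.map LinearMap.id f ∘ₗ Δ k

/-- The right action of `C*` on `C`: `c ← c* = Σ c*(c₁) c₂`. -/
noncomputable def actR (k : Type*) {X : Type*} [Field k] [Preorder X] [LocallyFiniteOrder X]
    (f : Module.Dual k (IC k X)) : IC k X →ₗ[k] IC k X :=
  (TensorProduct.lid k (IC k X)).toLinearMap ∘ₗ TensorProduct.map f LinearMap.id ∘ₗ Δ k

/-- The dual basis functional `p_{x,y}`. -/
noncomputable def pfun (k : Type*) {X : Type*} [Field k] [Preorder X] (x y : X) (h : x ≤ y) :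
    Module.Dual k (IC k X) :=
  Finsupp.lapply ⟨(x, y), h⟩

/-- `S_x`: the span of `{e_{x,y} : y ~ x}`. -/
noncomputable def Ssub (k : Type*) {X : Type*} [Field k] [Preorder X] (x : X) :
    Submodule k (IC k X) :=
  Submodule.span k {c | ∃ (y : X) (h : x ≤ y), y ≤ x ∧ c = e k x y h}

/-- `E_x`: the span of `{e_{x,y} : x ≤ y}`. -/
noncomputable def Esub (k : Type*) {X : Type*} [Field k] [Preorder X] (x : X) :
    Submodule k (IC k X) :=
  Submodule.span k {c | ∃ (y : X) (h : x ≤ y), c = e k x y h}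

lemma act_e (k : Type*) {X : Type*} [Field k] [Preorder X] [LocallyFiniteOrder X]
    (f : Module.Dual k (IC k X)) (x y : X) (h : x ≤ y) :
    act k f (e k x y h) = ∑ z ∈ (Finset.Icc x y).attach,
      f (e k z.1 y (Finset.mem_Icc.mp z.2).2) • e k x z.1 (Finset.mem_Icc.mp z.2).1 := by
  rw [act]
  simp only [LinearMap.comp_apply]
  rw [show (e k x y h : IC k X) = Finsupp.single ⟨(x,y),h⟩ 1 from rfl, Δ,
    Finsupp.lsum_single, LinearMap.toSpanSingleton_apply, one_smul, map_sum, map_sum]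
  refine Finset.sum_congr rfl fun z hz => ?_
  simp [TensorProduct.map_tmul, TensorProduct.rid_tmul]

open Classical in
lemma pfun_e (k : Type*) {X : Type*} [Field k] [Preorder X] (u v a b : X)
    (huv : u ≤ v) (hab : a ≤ b) :
    pfun k u v huv (e k a b hab) = if a = u ∧ b = v then 1 else 0 := by
  classical
  rw [pfun, e, Finsupp.lapply_apply, Finsupp.single_apply]
  congr 1
  simp [Subtype.ext_iff, Prod.ext_iff]

open Classical in
lemma act_pfun_e (k : Type*) {X : Type*} [Field k] [Preorder X] [LocallyFiniteOrder X]
    (x v y : X) (hv : x ≤ v) (h : x ≤ y) :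
    act k (pfun k x v hv) (e k x y h) = if y = v then e k x x le_rfl else 0 := by
  classical
  rw [act_e]
  by_cases hyv : y = v
  · rw [Finset.sum_eq_single_of_mem ⟨x, Finset.mem_Icc.mpr ⟨le_rfl, h⟩⟩ (Finset.mem_attach _ _)]
    · simp [pfun_e, hyv]
    · intro z _ hz
      rw [pfun_e]
      have : ¬ (z.1 = x ∧ y = v) := by
        rintro ⟨h1, -⟩
        exact hz (Subtype.ext h1)
      simp [this]
  · rw [if_neg hyv]
    refine Finset.sum_eq_zero fun z _ => ?_
    rw [pfun_e]
    simp [hyv]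

lemma Esub_le_supported (k : Type*) {X : Type*} [Field k] [Preorder X] (x : X) :
    Esub k x ≤ Finsupp.supported k k {q : {p : X × X // p.1 ≤ p.2} | q.1.1 = x} := by
  rw [Esub, Submodule.span_le]
  rintro c ⟨y, h, rfl⟩
  exact Finsupp.single_mem_supported k 1 rfl

lemma act_pfun (k : Type*) {X : Type*} [Field k] [Preorder X] [LocallyFiniteOrder X]
    (x v : X) (hv : x ≤ v) (z : IC k X) (hz : z ∈ Esub k x) :
    act k (pfun k x v hv) z = z ⟨(x, v), hv⟩ • e k x x le_rfl := by
  classical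
  have hsupp := Esub_le_supported k x hz
  rw [Finsupp.mem_supported] at hsupp
  set q : {p : X × X // p.1 ≤ p.2} := ⟨(x, v), hv⟩ with hqdef
  have key : ∀ p ∈ z.support,
      act k (pfun k x v hv) (Finsupp.single p (z p))
        = if p = q then z q • e k x x le_rfl else 0 := by
    intro p hp
    have hpx : p.1.1 = x := hsupp hp
    have hple : x ≤ p.1.2 := hpx ▸ p.2
    have hpe : p = ⟨(x, p.1.2), hple⟩ := Subtype.ext (Prod.ext hpx rfl)
    have h1 : Finsupp.single p (z p) = z p • e k x p.1.2 hple := by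
      rw [e, Finsupp.smul_single', mul_one, ← hpe]
    rw [h1, map_smul, act_pfun_e]
    by_cases hpv : p.1.2 = v
    · have hpq : p = q := Subtype.ext (Prod.ext hpx hpv)
      rw [if_pos hpv, if_pos hpq, hpq]
    · have hpq : p ≠ q := fun hh => hpv (by rw [hh])
      rw [if_neg hpv, if_neg hpq, smul_zero]
  conv_lhs => rw [← Finsupp.sum_single z]
  rw [Finsupp.sum, map_sum, Finset.sum_congr rfl key]
  by_cases hq : q ∈ z.support
  · rw [Finset.sum_ite_eq' _ q fun _ => z q • e k x x le_rfl, if_pos hq]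
  · rw [Finsupp.notMem_support_iff] at hq
    rw [hq]
    simp only [hq, zero_smul]
    exact Finset.sum_eq_zero fun p _ => by split <;> rfl

/-- `S_x` is an essential `C*`-submodule of `E_x`: every nonzero
`C*`-stable submodule of `E_x` meets `S_x` nontrivially. In particular, for every nonzero
`z ∈ E_x` there is `c* ∈ C*` with `0 ≠ c* → z ∈ S_x`. -/
theorem statement14 (k X : Type*) [Field k] [Preorder X] [LocallyFiniteOrder X] (x : X) :
    (∀ N : Submodule k (IC k X), N ≤ Esub k x →
      (∀ (f : Module.Dual k (IC k X)), ∀ c ∈ N, act k f c ∈ N) →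
      N ≠ ⊥ → N ⊓ Ssub k x ≠ ⊥) ∧
    (∀ z ∈ Esub k (X := X) x, z ≠ 0 →
      ∃ f : Module.Dual k (IC k X), act k f z ∈ Ssub k x ∧ act k f z ≠ 0) := by
  have exx_mem : e k x x le_rfl ∈ Ssub k x :=
    Submodule.subset_span ⟨x, le_rfl, le_rfl, rfl⟩
  have exx_ne : (e k x x le_rfl : IC k X) ≠ 0 :=
    by
    simp [e, Finsupp.single_eq_zero]
  have key : ∀ z ∈ Esub k (X := X) x, z ≠ 0 →
      ∃ f : Module.Dual k (IC k X), act k f z ∈ Ssub k x ∧ act k f z ≠ 0 := by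
    intro z hz hz0
    obtain ⟨p, hp⟩ := Finsupp.support_nonempty_iff.mpr hz0
    have hpx : p.1.1 = x := by
      have := Esub_le_supported k x hz
      rw [Finsupp.mem_supported] at this
      exact this hp
    have hv : x ≤ p.1.2 := hpx ▸ p.2
    refine ⟨pfun k x p.1.2 hv, ?_, ?_⟩
    · rw [act_pfun k x p.1.2 hv z hz]
      exact Submodule.smul_mem _ _ exx_mem
    · rw [act_pfun k x p.1.2 hv z hz]
      have hpe : (⟨(x, p.1.2), hv⟩ : {p : X × X // p.1 ≤ p.2}) = p :=
        Subtype.ext (Prod.ext hpx.symm rfl)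
      rw [hpe]
      exact smul_ne_zero (Finsupp.mem_support_iff.mp hp) exx_ne
  refine ⟨?_, key⟩
  intro N hNE hstab hN0
  obtain ⟨z, hzN, hz0⟩ := Submodule.exists_mem_ne_zero_of_ne_bot hN0
  obtain ⟨f, hfS, hf0⟩ := key z (hNE hzN) hz0
  rw [Submodule.ne_bot_iff]
  exact ⟨act k f z, ⟨hstab f z hzN, hfS⟩, hf0⟩
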